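/- Let X be a locally connected compact metric space and let f : X → X be a minimal homeomorphism (every orbit {fⁿ(x) : n ∈ ℤ} is dense in X). If there exists a Borel probability measure on X that is inner-distal with respect to f, then f is inner-distal. -/

import Mathlib

open Metric Set MeasureTheory Filter Topology

/-- The proximal cell of `x` with respect to the iterates `f ^ n`, `n : ℤ`. -/
noncomputable def proximalCell {X : Type*} [MetricSpace X] (f : Equiv.Perm X) (x : X) : Set X :=
  {y | (⨅ n : ℤ, dist ((f ^ n) x) ((f ^ n) y)) = 0}

private lemma contpow {X : Type*} [MetricSpace X] (f : X ≃ₜ X) :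
    ∀ m : ℤ, Continuous ⇑(f.toEquiv ^ m) := by
  have key : ∀ m : ℤ, Continuous ⇑(f.toEquiv ^ m) → Continuous ⇑(f.toEquiv ^ (m + 1)) ∧
      Continuous ⇑(f.toEquiv ^ (m - 1)) := by
    intro m hm
    constructor
    · have : ⇑(f.toEquiv ^ (m + 1)) = ⇑(f.toEquiv ^ m) ∘ ⇑f := by
        ext x; simp [zpow_add, Equiv.Perm.mul_apply]
      rw [this]; exact hm.comp f.continuous
    · have : ⇑(f.toEquiv ^ (m - 1)) = ⇑(f.toEquiv ^ m) ∘ ⇑f.symm := by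
        ext x
        have : f.toEquiv ^ (m - 1) = f.toEquiv ^ m * (f.toEquiv)⁻¹ := by
          rw [zpow_sub, zpow_one]
        simp [this, Equiv.Perm.mul_apply, Equiv.Perm.inv_def]
      rw [this]; exact hm.comp f.continuous_invFun
  intro m
  induction m using Int.induction_on with
  | zero => simpa using continuous_id
  | succ n ih => exact (key n ih).1
  | pred n ih => simpa using (key (-n) ih).2

/-- `f.toEquiv ^ m` as a homeomorphism. -/
private noncomputable def hpow {X : Type*} [MetricSpace X] (f : X ≃ₜ X) (m : ℤ) : X ≃ₜ X where
  toEquiv := f.toEquiv ^ m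
  continuous_toFun := contpow f m
  continuous_invFun := by
    show Continuous ⇑(f.toEquiv ^ m).symm
    have : (f.toEquiv ^ m).symm = f.toEquiv ^ (-m) := by
      rw [← Equiv.Perm.inv_def, ← zpow_neg]
    rw [this]; exact contpow f (-m)

private lemma cell_pow {X : Type*} [MetricSpace X] (e : Equiv.Perm X) (m : ℤ) (x y : X) :
    (e ^ m) y ∈ proximalCell e ((e ^ m) x) ↔ y ∈ proximalCell e x := by
  simp only [proximalCell, Set.mem_setOf_eq]
  have hrw : ∀ n : ℤ, dist ((e ^ n) ((e ^ m) x)) ((e ^ n) ((e ^ m) y))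
      = dist ((e ^ (n + m)) x) ((e ^ (n + m)) y) := by
    intro n
    simp [zpow_add, Equiv.Perm.mul_apply]
  have hre : (⨅ n : ℤ, dist ((e ^ n) ((e ^ m) x)) ((e ^ n) ((e ^ m) y)))
      = ⨅ n : ℤ, dist ((e ^ n) x) ((e ^ n) y) := by
    simp only [hrw]
    rw [iInf, iInf]
    congr 1
    exact (Equiv.addRight m).surjective.range_comp fun n : ℤ => dist ((e ^ n) x) ((e ^ n) y)
  rw [hre]

private lemma cell_image {X : Type*} [MetricSpace X] (e : Equiv.Perm X) (m : ℤ) (x : X) :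
    proximalCell e ((e ^ m) x) = (e ^ m) '' proximalCell e x := by
  ext y
  constructor
  · intro hy
    refine ⟨(e ^ m)⁻¹ y, ?_, by simp⟩
    have := (cell_pow e m x ((e ^ m)⁻¹ y)).mp ?_
    · exact this
    · simpa using hy
  · rintro ⟨z, hz, rfl⟩
    exact (cell_pow e m x z).mpr hz

/-- On a locally connected compact metric space, a minimal homeomorphism supporting an
inner-distal measure is inner-distal. -/
theorem stmt5 {X : Type*} [MetricSpace X] [CompactSpace X] [LocallyConnectedSpace X]
    [MeasurableSpace X] [BorelSpace X]
    (f : X ≃ₜ X)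
    (hmin : ∀ x : X, Dense (Set.range fun n : ℤ => (f.toEquiv ^ n) x))
    (h : ∃ μ : Measure X, IsProbabilityMeasure μ ∧
      ∀ x : X, μ (interior (proximalCell f.toEquiv x)) = 0) :
    ∀ x : X, interior (proximalCell f.toEquiv x) = ∅ := by
  intro x
  by_contra hne
  obtain ⟨μ, hμ, hμ0⟩ := h
  set e := f.toEquiv with he
  have hU : (interior (proximalCell e x)).Nonempty := nonempty_iff_ne_empty.mpr hne
  -- interiors transform under powers of f
  have hint : ∀ m : ℤ, interior (proximalCell e ((e ^ m) x))
      = (e ^ m) '' interior (proximalCell e x) := by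
    intro m
    rw [cell_image e m x]
    have := (hpow f m).image_interior (proximalCell e x)
    exact this.symm
  -- the union over the orbit covers X
  have hcover : (⋃ m : ℤ, interior (proximalCell e ((e ^ m) x))) = Set.univ := by
    apply Set.eq_univ_of_forall
    intro z
    obtain ⟨w, ⟨n, rfl⟩, hw⟩ :=
      (hmin z).exists_mem_open isOpen_interior hU
    refine Set.mem_iUnion.mpr ⟨-n, ?_⟩
    rw [hint (-n)]
    refine ⟨(e ^ n) z, hw, ?_⟩
    simp [← Equiv.Perm.mul_apply, ← zpow_add]
  have hz : μ (⋃ m : ℤ, interior (proximalCell e ((e ^ m) x))) = 0 :=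
    measure_iUnion_null fun m => hμ0 _
  rw [hcover] at hz
  have := hμ.measure_univ
  rw [hz] at this
  exact one_ne_zero this.symm
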